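/- Let F : ℝ → [0,∞) be monotone nondecreasing and right-continuous with F(λ) constant for λ ≥ K, and suppose ∫_{0⁺}^∞ ln λ dF(λ) > −∞. If F_i is a net of such functions with the same bound K, F_i(λ) → F(λ) at continuity points (e.g., induced by convergence of all moments tr(Δ_i^m) → tr(Δ^m) of uniformly norm-bounded positive operators), and exp(∫_{0⁺}^∞ ln λ dF_i(λ)) ≥ 1 for all i, then F_i(0) → F(0) and exp(∫_{0⁺}^∞ ln λ dF(λ)) ≥ 1. -/

import Mathlib

open MeasureTheory Filter

namespace Stmt18Aux

open Set

lemma measure_Ioi_zero (G : StieltjesFunction ℝ) {K : ℝ} (hGK : ∀ x ≥ K, G x = G K) :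
    G.measure (Set.Ioi K) = 0 := by
  have hsub : Set.Ioi K ⊆ ⋃ n : ℕ, Set.Ioc K (K + (n + 1)) := by
    intro x hx
    obtain ⟨n, hn⟩ := exists_nat_gt (x - K)
    exact Set.mem_iUnion.2 ⟨n, hx, by push_cast; linarith⟩
  have hz : ∀ n : ℕ, G.measure (Set.Ioc K (K + (n + 1))) = 0 := by
    intro n
    rw [G.measure_Ioc, hGK (K + (n + 1)) (le_add_of_nonneg_right (by positivity)),
      sub_self, ENNReal.ofReal_zero]
  refine le_antisymm (le_trans (measure_mono hsub) (le_trans (measure_iUnion_le _) ?_))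
    zero_le
  simp [hz]

lemma toReal_measure_Ioc (G : StieltjesFunction ℝ) {a b : ℝ} (hab : a ≤ b) :
    (G.measure (Set.Ioc a b)).toReal = G b - G a := by
  rw [G.measure_Ioc, ENNReal.toReal_ofReal (sub_nonneg.2 (G.mono hab))]

lemma integrableOn_const_Ioc (G : StieltjesFunction ℝ) {a b c : ℝ} :
    IntegrableOn (fun _ : ℝ => c) (Set.Ioc a b) G.measure := by
  refine integrableOn_const ?_
  rw [G.measure_Ioc]
  exact ENNReal.ofReal_ne_top

lemma integral_le_log_mul (G : StieltjesFunction ℝ) {a b : ℝ} (ha : 0 ≤ a) (hab : a ≤ b)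
    (h : IntegrableOn Real.log (Set.Ioc a b) G.measure) :
    ∫ x in Set.Ioc a b, Real.log x ∂G.measure ≤ Real.log b * (G b - G a) := by
  calc ∫ x in Set.Ioc a b, Real.log x ∂G.measure
      ≤ ∫ _ in Set.Ioc a b, Real.log b ∂G.measure := by
        refine setIntegral_mono_on h (integrableOn_const_Ioc G) measurableSet_Ioc ?_
        intro x hx
        exact Real.log_le_log (lt_of_le_of_lt ha hx.1) hx.2
    _ = (G b - G a) * Real.log b := by
        rw [setIntegral_const, measureReal_def, toReal_measure_Ioc G hab, smul_eq_mul]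
    _ = Real.log b * (G b - G a) := mul_comm _ _

lemma log_mul_le_integral (G : StieltjesFunction ℝ) {a b : ℝ} (ha : 0 < a) (hab : a ≤ b)
    (h : IntegrableOn Real.log (Set.Ioc a b) G.measure) :
    Real.log a * (G b - G a) ≤ ∫ x in Set.Ioc a b, Real.log x ∂G.measure := by
  calc Real.log a * (G b - G a) = (G b - G a) * Real.log a := mul_comm _ _
    _ = ∫ _ in Set.Ioc a b, Real.log a ∂G.measure := by
        rw [setIntegral_const, measureReal_def, toReal_measure_Ioc G hab, smul_eq_mul]
    _ ≤ ∫ x in Set.Ioc a b, Real.log x ∂G.measure := by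
        refine setIntegral_mono_on (integrableOn_const_Ioc G) h measurableSet_Ioc ?_
        intro x hx
        exact Real.log_le_log ha hx.1.le

lemma integral_Ioc_split (μ : Measure ℝ) {a b c : ℝ} (hab : a ≤ b) (hbc : b ≤ c)
    (h : IntegrableOn Real.log (Set.Ioc a c) μ) :
    ∫ x in Set.Ioc a c, Real.log x ∂μ
      = (∫ x in Set.Ioc a b, Real.log x ∂μ) + ∫ x in Set.Ioc b c, Real.log x ∂μ := by
  have h1 : IntegrableOn Real.log (Set.Ioc a b) μ :=
    h.mono_set (Set.Ioc_subset_Ioc_right hbc)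
  have h2 : IntegrableOn Real.log (Set.Ioc b c) μ :=
    h.mono_set (Set.Ioc_subset_Ioc_left hab)
  rw [← Set.Ioc_union_Ioc_eq_Ioc hab hbc]
  exact setIntegral_union (Set.Ioc_disjoint_Ioc_of_le le_rfl) measurableSet_Ioc h1 h2

lemma integral_Ioi_eq (G : StieltjesFunction ℝ) {K b : ℝ} (hb0 : 0 ≤ b) (hKb : K ≤ b)
    (hGK : ∀ x ≥ K, G x = G K) (h : IntegrableOn Real.log (Set.Ioi 0) G.measure) :
    ∫ x in Set.Ioi (0 : ℝ), Real.log x ∂G.measure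
      = ∫ x in Set.Ioc 0 b, Real.log x ∂G.measure := by
  have hz : G.measure (Set.Ioi b) = 0 :=
    measure_mono_null (Set.Ioi_subset_Ioi hKb) (measure_Ioi_zero G hGK)
  have h1 : IntegrableOn Real.log (Set.Ioc 0 b) G.measure :=
    h.mono_set Set.Ioc_subset_Ioi_self
  have h2 : IntegrableOn Real.log (Set.Ioi b) G.measure :=
    h.mono_set (Set.Ioi_subset_Ioi hb0)
  rw [← Set.Ioc_union_Ioi_eq_Ioi hb0,
    setIntegral_union Set.Ioc_disjoint_Ioi_same measurableSet_Ioi h1 h2,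
    Measure.restrict_eq_zero.mpr hz, integral_zero_measure, add_zero]

lemma exists_cont (F : StieltjesFunction ℝ) {x y : ℝ} (hxy : x < y) :
    ∃ z, x < z ∧ z < y ∧ ContinuousAt F z := by
  have hc : Set.Countable {t : ℝ | ¬ ContinuousAt F t} := F.mono.countable_not_continuousAt
  have hd : Dense {t : ℝ | ¬ ContinuousAt F t}ᶜ := hc.dense_compl ℝ
  obtain ⟨z, hz1, hz2⟩ := hd.exists_mem_open isOpen_Ioo (Set.nonempty_Ioo.2 hxy)
  exact ⟨z, hz2.1, hz2.2, not_not.1 hz1⟩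

end Stmt18Aux

/-- (Measure-theoretic approximation lemma.)  Let `F : ℝ → [0,∞)` be
monotone nondecreasing and right-continuous (a Stieltjes function), vanishing on `(−∞,0)`,
constant for `λ ≥ K`, with `∫_{0⁺}^∞ ln λ dF > −∞` (integrability of `ln`).  If `(F_i)` is a
net of such functions with the same bound `K`, converging to `F` at continuity points, and
`exp(∫_{0⁺}^∞ ln λ dF_i) ≥ 1` for all `i`, then `F_i(0) → F(0)` and
`exp(∫_{0⁺}^∞ ln λ dF) ≥ 1`. -/
theorem stmt_18 {ι : Type*} (l : Filter ι) [l.NeBot]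
    (F : StieltjesFunction ℝ) (Fi : ι → StieltjesFunction ℝ)
    (K : ℝ) (hK : 0 < K)
    (hFpos : ∀ x, 0 ≤ F x) (hFneg : ∀ x < (0 : ℝ), F x = 0)
    (hFK : ∀ x ≥ K, F x = F K)
    (hFipos : ∀ i x, 0 ≤ Fi i x) (hFineg : ∀ i, ∀ x < (0 : ℝ), Fi i x = 0)
    (hFiK : ∀ i, ∀ x ≥ K, Fi i x = Fi i K)
    (hint : IntegrableOn Real.log (Set.Ioi (0 : ℝ)) F.measure)
    (hconv : ∀ x, ContinuousAt F x → Tendsto (fun i => Fi i x) l (nhds (F x)))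
    (hidet : ∀ i, IntegrableOn Real.log (Set.Ioi (0 : ℝ)) (Fi i).measure ∧
      1 ≤ Real.exp (∫ x in Set.Ioi (0 : ℝ), Real.log x ∂(Fi i).measure)) :
    Tendsto (fun i => Fi i 0) l (nhds (F 0)) ∧
      1 ≤ Real.exp (∫ x in Set.Ioi (0 : ℝ), Real.log x ∂F.measure) := by
  have hK1 : (1:ℝ) < K + 1 := by linarith
  have hK1' : (0:ℝ) ≤ K + 1 := by linarith
  have hKK1 : K ≤ K + 1 := by linarith
  -- continuity of F at K+1
  have hcontK : ContinuousAt F (K + 1) := by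
    have heq : F =ᶠ[nhds (K + 1)] fun _ => F K := by
      filter_upwards [Ioi_mem_nhds (show K < K + 1 by linarith)] with x hx
      exact hFK x hx.le
    exact heq.continuousAt
  have hMi : Tendsto (fun i => Fi i (K + 1)) l (nhds (F (K + 1))) := hconv _ hcontK
  -- rewriting the integrals over `Ioi 0` as integrals over `Ioc 0 (K+1)`
  have heqF : ∫ x in Set.Ioi (0:ℝ), Real.log x ∂F.measure
      = ∫ x in Set.Ioc (0:ℝ) (K+1), Real.log x ∂F.measure :=
    Stmt18Aux.integral_Ioi_eq F hK1' hKK1 hFK hint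
  have heqFi : ∀ i, ∫ x in Set.Ioi (0:ℝ), Real.log x ∂(Fi i).measure
      = ∫ x in Set.Ioc (0:ℝ) (K+1), Real.log x ∂(Fi i).measure := fun i =>
    Stmt18Aux.integral_Ioi_eq (Fi i) hK1' hKK1 (hFiK i) (hidet i).1
  -- integrability facts
  have hIntF : ∀ a b : ℝ, 0 < a → IntegrableOn Real.log (Set.Ioc a b) F.measure :=
    fun a b ha => hint.mono_set (fun x hx => ha.trans hx.1)
  have hIntFi : ∀ i, ∀ a b : ℝ, 0 < a → IntegrableOn Real.log (Set.Ioc a b) (Fi i).measure :=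
    fun i a b ha => (hidet i).1.mono_set (fun x hx => ha.trans hx.1)
  have hIntF0 : ∀ b : ℝ, IntegrableOn Real.log (Set.Ioc 0 b) F.measure :=
    fun b => hint.mono_set Set.Ioc_subset_Ioi_self
  have hIntFi0 : ∀ i, ∀ b : ℝ, IntegrableOn Real.log (Set.Ioc 0 b) (Fi i).measure :=
    fun i b => (hidet i).1.mono_set Set.Ioc_subset_Ioi_self
  -- nonnegativity of the determinants
  have hdet : ∀ i, 0 ≤ ∫ x in Set.Ioc (0:ℝ) (K+1), Real.log x ∂(Fi i).measure := by
    intro i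
    have h := (hidet i).2
    rw [show (1:ℝ) = Real.exp 0 from (Real.exp_zero).symm, Real.exp_le_exp] at h
    rwa [heqFi i] at h
  have hsplitpos : ∀ i, ∀ ε : ℝ, 0 < ε → ε ≤ K + 1 →
      0 ≤ (∫ x in Set.Ioc (0:ℝ) ε, Real.log x ∂(Fi i).measure)
        + ∫ x in Set.Ioc ε (K+1), Real.log x ∂(Fi i).measure := by
    intro i ε hε hεK
    have h := hdet i
    rwa [Stmt18Aux.integral_Ioc_split _ hε.le hεK (hIntFi0 i _)] at h
  have hnnI : ∀ i, ∀ ε : ℝ, 0 < ε → ε ≤ 1 →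
      0 ≤ ∫ x in Set.Ioc ε (K+1), Real.log x ∂(Fi i).measure := by
    intro i ε hε hε1
    have h1 := hsplitpos i ε hε (by linarith)
    have h2 : ∫ x in Set.Ioc (0:ℝ) ε, Real.log x ∂(Fi i).measure ≤ 0 :=
      setIntegral_nonpos measurableSet_Ioc
        (fun x hx => Real.log_nonpos hx.1.le (hx.2.trans hε1))
    linarith
  -- the key approximation estimate, by induction on the number of subdivision steps
  have key : ∀ δ : ℝ, 0 < δ → ∀ n : ℕ, ∀ a b : ℝ, 0 < a → a ≤ b →
      ContinuousAt F a → ContinuousAt F b →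
      Real.log b < Real.log a + ((n : ℝ) + 1) * δ →
      ∀ η : ℝ, 0 < η → ∀ᶠ i in l,
        ∫ x in Set.Ioc a b, Real.log x ∂(Fi i).measure
          ≤ (∫ x in Set.Ioc a b, Real.log x ∂F.measure) + δ * (F b - F a) + η := by
    intro δ hδ n
    induction n with
    | zero =>
      intro a b ha hab hca hcb hgap η hη
      have hFab : (0:ℝ) ≤ F b - F a := sub_nonneg.2 (F.mono hab)
      have htend : Tendsto (fun i => Real.log b * (Fi i b - Fi i a)) l
          (nhds (Real.log b * (F b - F a))) := ((hconv b hcb).sub (hconv a hca)).const_mul _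
      have hev := htend.eventually_lt_const (lt_add_of_pos_right _ hη)
      filter_upwards [hev] with i hi
      have h1 := Stmt18Aux.integral_le_log_mul (Fi i) ha.le hab (hIntFi i a b ha)
      have h2 := Stmt18Aux.log_mul_le_integral F ha hab (hIntF a b ha)
      have h3 : Real.log b * (F b - F a) ≤ (Real.log a + δ) * (F b - F a) := by
        have hb' : Real.log b ≤ Real.log a + δ := by push_cast at hgap; linarith
        exact mul_le_mul_of_nonneg_right hb' hFab
      have h4 : (Real.log a + δ) * (F b - F a)
          = Real.log a * (F b - F a) + δ * (F b - F a) := by ring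
      linarith
    | succ n ih =>
      intro a b ha hab hca hcb hgap η hη
      by_cases hsmall : Real.log b < Real.log a + ((n : ℝ) + 1) * δ
      · exact ih a b ha hab hca hcb hsmall η hη
      push_neg at hsmall
      have hnδ : (0:ℝ) ≤ (n : ℝ) * δ := mul_nonneg (Nat.cast_nonneg n) hδ.le
      have hb : 0 < b := ha.trans_le hab
      have hlow : (0:ℝ) < b * Real.exp (-δ) := by positivity
      have hup : (0:ℝ) < a * Real.exp (((n:ℝ) + 1) * δ) := by positivity
      have hloglow : Real.log (b * Real.exp (-δ)) = Real.log b - δ := by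
        rw [Real.log_mul (ne_of_gt hb) (Real.exp_ne_zero _), Real.log_exp]; ring
      have hlogup : Real.log (a * Real.exp (((n:ℝ)+1) * δ))
          = Real.log a + ((n:ℝ)+1) * δ := by
        rw [Real.log_mul (ne_of_gt ha) (Real.exp_ne_zero _), Real.log_exp]
      have hlu : b * Real.exp (-δ) < a * Real.exp (((n:ℝ)+1) * δ) := by
        rw [← Real.log_lt_log_iff hlow hup, hloglow, hlogup]
        push_cast at hgap
        linarith
      obtain ⟨m, hm1, hm2, hcm⟩ := Stmt18Aux.exists_cont F hlu
      have hmpos : 0 < m := hlow.trans hm1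
      have ham : a ≤ m := by
        have h5 : Real.log a ≤ Real.log (b * Real.exp (-δ)) := by
          rw [hloglow]; linarith
        have := (Real.log_le_log_iff ha hlow).1 h5
        linarith
      have hmb : m ≤ b := by
        have h5 : Real.log (a * Real.exp (((n:ℝ)+1) * δ)) ≤ Real.log b := by
          rw [hlogup]; exact hsmall
        have := (Real.log_le_log_iff hup hb).1 h5
        linarith
      have hgap1 : Real.log m < Real.log a + ((n:ℝ) + 1) * δ := by
        have := (Real.log_lt_log_iff hmpos hup).2 hm2
        rwa [hlogup] at this
      have hgap2 : Real.log b - δ < Real.log m := by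
        have := (Real.log_lt_log_iff hlow hmpos).2 hm1
        rwa [hloglow] at this
      have e1 := ih a m ha ham hca hcm hgap1 (η/2) (by linarith)
      have e2 := ih m b hmpos hmb hcm hcb (by linarith) (η/2) (by linarith)
      filter_upwards [e1, e2] with i h1 h2
      rw [Stmt18Aux.integral_Ioc_split (Fi i).measure ham hmb (hIntFi i a b ha),
        Stmt18Aux.integral_Ioc_split F.measure ham hmb (hIntF a b ha)]
      have h6 : δ * (F m - F a) + δ * (F b - F m) = δ * (F b - F a) := by ring
      linarith
  -- claim 1 : the integral of `log` over `(ε, K+1]` w.r.t. `F.measure` is nonnegative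
  have claim1 : ∀ ε : ℝ, 0 < ε → ε ≤ 1 → ContinuousAt F ε →
      0 ≤ ∫ x in Set.Ioc ε (K+1), Real.log x ∂F.measure := by
    intro ε hε hε1 hcε
    have main : ∀ η : ℝ, 0 < η →
        0 ≤ (∫ x in Set.Ioc ε (K+1), Real.log x ∂F.measure) + η := by
      intro η hη
      set B := F (K+1) - F ε with hBdef
      have hB : 0 ≤ B := sub_nonneg.2 (F.mono (by linarith))
      set δ := η / (2 * (B + 1)) with hδdef
      have hδ : 0 < δ := by positivity
      obtain ⟨n, hn⟩ := exists_nat_gt ((Real.log (K+1) - Real.log ε) / δ)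
      have hgap : Real.log (K+1) < Real.log ε + ((n:ℝ) + 1) * δ := by
        have h := (div_lt_iff₀ hδ).1 hn
        nlinarith
      have hev := key δ hδ n ε (K+1) hε (by linarith) hcε hcontK hgap (η/2) (by linarith)
      obtain ⟨i, hi⟩ := hev.exists
      have h0 := hnnI i ε hε hε1
      have hδB : δ * B ≤ η / 2 := by
        have hB1 : (0:ℝ) < B + 1 := by linarith
        have h1 : δ * (B + 1) = η / 2 := by
          rw [hδdef]; field_simp
        have h2 : δ * (B + 1) = δ * B + δ := by ring
        linarith
      linarith
    by_contra hI
    push_neg at hI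
    have := main (-(∫ x in Set.Ioc ε (K+1), Real.log x ∂F.measure)/2) (by linarith)
    linarith
  -- claim 2 : nonnegativity of the full integral for F
  have hfinal2 : 0 ≤ ∫ x in Set.Ioc (0:ℝ) (K+1), Real.log x ∂F.measure := by
    set J : ℕ → ℝ :=
      fun n => ∫ x in Set.Ioc (0:ℝ) (1/((n:ℝ)+1)), |Real.log x| ∂F.measure with hJ
    have habs : IntegrableOn (fun x => |Real.log x|) (Set.Ioc (0:ℝ) 1) F.measure :=
      (hint.mono_set Set.Ioc_subset_Ioi_self).abs
    have hanti : Antitone (fun n : ℕ => Set.Ioc (0:ℝ) (1/((n:ℝ)+1))) := by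
      intro n m hnm
      apply Set.Ioc_subset_Ioc_right
      have hcast : ((n:ℝ)+1) ≤ (m:ℝ)+1 := by
        have : (n:ℝ) ≤ (m:ℝ) := Nat.cast_le.2 hnm
        linarith
      exact one_div_le_one_div_of_le (by positivity) hcast
    have hInter : (⋂ n : ℕ, Set.Ioc (0:ℝ) (1/((n:ℝ)+1))) = ∅ := by
      ext x
      simp only [Set.mem_iInter, Set.mem_Ioc, Set.mem_empty_iff_false, iff_false, not_forall]
      by_contra hx
      push_neg at hx
      obtain ⟨n, hn⟩ := exists_nat_gt (1/x)
      have hx0 : 0 < x := (hx 0).1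
      have h2 : x ≤ 1/((n:ℝ)+1) := (hx n).2
      have h3 : 1 < x * ((n:ℝ)+1) := by
        rw [div_lt_iff₀ hx0] at hn
        nlinarith
      have h4 : 1/((n:ℝ)+1) < x := by
        rw [div_lt_iff₀ (by positivity)]
        nlinarith
      linarith
    have htd : Tendsto J atTop (nhds 0) := by
      have h := tendsto_setIntegral_of_antitone (μ := F.measure)
        (f := fun x => |Real.log x|) (fun n : ℕ => measurableSet_Ioc) hanti
        ⟨0, by simpa using habs⟩
      rw [hInter, Measure.restrict_empty, integral_zero_measure] at h
      exact h
    have hineq : ∀ n : ℕ, -(J n) ≤ ∫ x in Set.Ioc (0:ℝ) (K+1), Real.log x ∂F.measure := by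
      intro n
      have hn1 : (0:ℝ) < 1/((n:ℝ)+1) := by positivity
      obtain ⟨ε, hε0, hεlt, hεc⟩ := Stmt18Aux.exists_cont F hn1
      have h1n : (1:ℝ)/((n:ℝ)+1) ≤ 1 := by
        rw [div_le_one (by positivity)]
        linarith [Nat.cast_nonneg (α := ℝ) n]
      have hε1 : ε ≤ 1 := by linarith
      have hc1 := claim1 ε hε0 hε1 hεc
      have hsplit := Stmt18Aux.integral_Ioc_split F.measure hε0.le (by linarith)
        (hIntF0 (K+1))
      have habsε : IntegrableOn (fun x => |Real.log x|) (Set.Ioc (0:ℝ) ε) F.measure :=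
        (hIntF0 ε).abs
      have hlo : -(∫ x in Set.Ioc (0:ℝ) ε, |Real.log x| ∂F.measure)
          ≤ ∫ x in Set.Ioc (0:ℝ) ε, Real.log x ∂F.measure := by
        rw [← integral_neg]
        refine setIntegral_mono_on habsε.neg (hIntF0 ε) measurableSet_Ioc ?_
        intro x _
        exact neg_abs_le _
      have hmono : ∫ x in Set.Ioc (0:ℝ) ε, |Real.log x| ∂F.measure ≤ J n := by
        refine setIntegral_mono_set
          (habs.mono_set (Set.Ioc_subset_Ioc_right h1n))
          (Filter.Eventually.of_forall fun x => abs_nonneg _)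
          (HasSubset.Subset.eventuallyLE (Set.Ioc_subset_Ioc_right hεlt.le))
      linarith
    have hlim := le_of_tendsto htd.neg (Filter.Eventually.of_forall hineq)
    simpa using hlim
  refine ⟨?_, ?_⟩
  · -- convergence of the jumps at 0
    rw [Metric.tendsto_nhds]
    intro ϑ hϑ
    have hMev : ∀ᶠ i in l, Fi i (K+1) < F (K+1) + 1 :=
      hMi.eventually_lt_const (lt_add_of_pos_right _ one_pos)
    set M := F (K+1) + 1 with hMdef
    have hlogK : 0 < Real.log (K+1) := Real.log_pos hK1
    set C := Real.log (K+1) * M with hCdef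
    have hC0 : 0 < C := mul_pos hlogK (by have := hFpos (K+1); linarith)
    have hev0 : ∀ᶠ x in nhdsWithin 0 (Set.Ici 0), F x < F 0 + ϑ/4 :=
      (F.right_continuous 0).eventually_lt_const (by linarith)
    obtain ⟨r, hr0, hr⟩ := Metric.mem_nhdsWithin_iff.1 hev0
    set U := min (min 1 r) (Real.exp (-((4*C+4)/ϑ))) with hUdef
    have hU0 : 0 < U := lt_min (lt_min one_pos hr0) (Real.exp_pos _)
    obtain ⟨ε, hε0, hεU, hεc⟩ := Stmt18Aux.exists_cont F hU0
    have hε1 : ε < 1 := lt_of_lt_of_le hεU ((min_le_left _ _).trans (min_le_left _ _))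
    have hεr : ε < r := lt_of_lt_of_le hεU ((min_le_left _ _).trans (min_le_right _ _))
    have hεe : ε < Real.exp (-((4*C+4)/ϑ)) := lt_of_lt_of_le hεU (min_le_right _ _)
    have hFε : F ε < F 0 + ϑ/4 := by
      refine hr ⟨?_, hε0.le⟩
      rw [Metric.mem_ball, Real.dist_eq, sub_zero, abs_of_pos hε0]
      exact hεr
    have hlogε : Real.log ε < -((4*C+4)/ϑ) := by
      have h := Real.log_lt_log hε0 hεe
      rwa [Real.log_exp] at h
    have hL : 0 < -Real.log ε := by
      have hneg : 0 < (4*C+4)/ϑ := div_pos (by linarith) hϑ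
      linarith
    have hmass : ∀ᶠ i in l, Fi i ε - Fi i 0 ≤ ϑ/4 := by
      filter_upwards [hMev] with i hMi'
      have hpos := hsplitpos i ε hε0 (by linarith)
      have h1 := Stmt18Aux.integral_le_log_mul (Fi i) le_rfl hε0.le (hIntFi0 i ε)
      have h2 := Stmt18Aux.integral_le_log_mul (Fi i) hε0.le
        (show ε ≤ K + 1 by linarith) (hIntFi i ε (K+1) hε0)
      have h3 : Real.log (K+1) * (Fi i (K+1) - Fi i ε) ≤ C := by
        rw [hCdef]
        have hle : Fi i (K+1) - Fi i ε ≤ M := by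
          have := hFipos i ε
          linarith
        exact mul_le_mul_of_nonneg_left hle hlogK.le
      set m := Fi i ε - Fi i 0 with hm
      have hm0 : 0 ≤ m := sub_nonneg.2 ((Fi i).mono hε0.le)
      have h4 : 0 ≤ Real.log ε * m + C := by linarith
      have h6 : m * (-Real.log ε) ≤ C := by linarith
      have h5 : (4*C+4)/ϑ < -Real.log ε := by linarith
      have h7 : C < ϑ/4 * (-Real.log ε) := by
        have h8 := (div_lt_iff₀ hϑ).1 h5
        linarith
      have h8 : m * (-Real.log ε) < ϑ/4 * (-Real.log ε) := lt_of_le_of_lt h6 h7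
      exact le_of_lt (lt_of_mul_lt_mul_right h8 hL.le)
    have hconvε : ∀ᶠ i in l, |Fi i ε - F ε| < ϑ/4 := by
      have h := Metric.tendsto_nhds.1 (hconv ε hεc) (ϑ/4) (by linarith)
      simpa [Real.dist_eq] using h
    filter_upwards [hmass, hconvε] with i h1 h2
    rw [Real.dist_eq, abs_lt]
    have h3 := abs_lt.1 h2
    have h4 : Fi i 0 ≤ Fi i ε := (Fi i).mono hε0.le
    have h5 : F 0 ≤ F ε := F.mono hε0.le
    constructor <;> linarith [h3.1, h3.2]
  · rw [heqF]
    exact Real.one_le_exp hfinal2
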